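/- ∫_0^∞ ∫_0^∞ x³ y / (1 + x² + y² + x² y² + x⁴)^4 dx dy = (6 − √3 π)/108. -/

import Mathlib

set_option maxHeartbeats 1000000


open MeasureTheory Real Filter Topology

private lemma q_pos (x : ℝ) : 0 < 1 + x ^ 2 + x ^ 4 := by positivity

private lemma inner_integral (x : ℝ) (hx : 0 < x) :
    ∫ y in Set.Ioi (0:ℝ), x ^ 3 * y / (1 + x ^ 2 + y ^ 2 + x ^ 2 * y ^ 2 + x ^ 4) ^ 4
      = x ^ 3 / (6 * (1 + x ^ 2) * (1 + x ^ 2 + x ^ 4) ^ 3) := by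
  have hB : (0:ℝ) < 1 + x ^ 2 := by positivity
  have key := integral_Ioi_of_hasDerivAt_of_nonneg' (a := (0:ℝ))
      (g := fun y => -(x ^ 3) / (6 * (1 + x ^ 2) * (1 + x ^ 2 + y ^ 2 + x ^ 2 * y ^ 2 + x ^ 4) ^ 3))
      (g' := fun y => x ^ 3 * y / (1 + x ^ 2 + y ^ 2 + x ^ 2 * y ^ 2 + x ^ 4) ^ 4)
      (l := 0) ?_ ?_ ?_
  · rw [key]
    ring
  · intro y _
    have hD : (0:ℝ) < 1 + x ^ 2 + y ^ 2 + x ^ 2 * y ^ 2 + x ^ 4 := by positivity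
    have h1 : HasDerivAt (fun y : ℝ => y ^ 2) (2 * y) y := by
      simpa using hasDerivAt_pow 2 y
    have hDder : HasDerivAt (fun y : ℝ => 1 + x ^ 2 + y ^ 2 + x ^ 2 * y ^ 2 + x ^ 4)
        (2 * y + x ^ 2 * (2 * y)) y := by
      simpa using ((h1.const_add (1 + x ^ 2)).add (h1.const_mul (x ^ 2))).add_const (x ^ 4)
    have hden : HasDerivAt (fun y : ℝ => 6 * (1 + x ^ 2) * (1 + x ^ 2 + y ^ 2 + x ^ 2 * y ^ 2 + x ^ 4) ^ 3)
        (6 * (1 + x ^ 2) * ((3:ℕ) * (1 + x ^ 2 + y ^ 2 + x ^ 2 * y ^ 2 + x ^ 4) ^ 2 * (2 * y + x ^ 2 * (2 * y)))) y :=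
      (hDder.pow 3).const_mul _
    have hF := (hasDerivAt_const y (-(x ^ 3))).div hden (by positivity)
    refine hF.congr_deriv ?_
    rw [div_eq_div_iff (by positivity) (by positivity)]
    ring
  · intro y hy
    have hy0 : (0:ℝ) < y := hy
    positivity
  · -- limit at infinity is 0
    apply Tendsto.div_atTop (tendsto_const_nhds (x := -(x ^ 3)))
    have hD : Tendsto (fun y : ℝ => 1 + x ^ 2 + y ^ 2 + x ^ 2 * y ^ 2 + x ^ 4) atTop atTop := by
      apply tendsto_atTop_mono (fun y => ?_) tendsto_id
      simp only [id]
      nlinarith [sq_nonneg (y - 1), sq_nonneg x, sq_nonneg (x * y), sq_nonneg (x ^ 2)]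
    have h3 : Tendsto (fun y : ℝ => (1 + x ^ 2 + y ^ 2 + x ^ 2 * y ^ 2 + x ^ 4) ^ 3) atTop atTop :=
      (tendsto_pow_atTop (n := 3) (by norm_num)).comp hD
    exact h3.const_mul_atTop (by positivity)

private noncomputable def Ganti (x : ℝ) : ℝ :=
  (1/24) * Real.log (1 + x ^ 2 + x ^ 4) - (1/12) * Real.log (1 + x ^ 2)
    - (Real.sqrt 3 / 36) * Real.arctan ((2 * x ^ 2 + 1) / Real.sqrt 3)
    - 1 / (24 * (1 + x ^ 2 + x ^ 4)) + (x ^ 2 - 1) / (72 * (1 + x ^ 2 + x ^ 4) ^ 2)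

private lemma Ganti_hasDeriv (x : ℝ) :
    HasDerivAt Ganti (x ^ 3 / (6 * (1 + x ^ 2) * (1 + x ^ 2 + x ^ 4) ^ 3)) x := by
  have hq : (0:ℝ) < 1 + x ^ 2 + x ^ 4 := q_pos x
  have hB : (0:ℝ) < 1 + x ^ 2 := by positivity
  have hs3 : (0:ℝ) < Real.sqrt 3 := Real.sqrt_pos.mpr (by norm_num)
  have hs3sq : Real.sqrt 3 ^ 2 = 3 := Real.sq_sqrt (by norm_num)
  have h1 : HasDerivAt (fun x : ℝ => x ^ 2) (2 * x) x := by
    simpa using hasDerivAt_pow 2 x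
  have h4 : HasDerivAt (fun x : ℝ => x ^ 4) (4 * x ^ 3) x := by
    simpa using hasDerivAt_pow 4 x
  have hqd : HasDerivAt (fun x : ℝ => 1 + x ^ 2 + x ^ 4) (2 * x + 4 * x ^ 3) x :=
    (h1.const_add 1).add h4
  -- log terms
  have hL1 : HasDerivAt (fun x : ℝ => (1/24) * Real.log (1 + x ^ 2 + x ^ 4))
      ((1/24) * ((2 * x + 4 * x ^ 3) / (1 + x ^ 2 + x ^ 4))) x :=
    (hqd.log (ne_of_gt hq)).const_mul _
  have hL2 : HasDerivAt (fun x : ℝ => (1/12) * Real.log (1 + x ^ 2))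
      ((1/12) * ((2 * x) / (1 + x ^ 2))) x :=
    ((h1.const_add 1).log (ne_of_gt hB)).const_mul _
  -- arctan term
  have hu : HasDerivAt (fun x : ℝ => (2 * x ^ 2 + 1) / Real.sqrt 3)
      ((2 * (2 * x)) / Real.sqrt 3) x :=
    ((h1.const_mul 2).add_const 1).div_const _
  have harc0 := (Real.hasDerivAt_arctan ((2 * x ^ 2 + 1) / Real.sqrt 3)).comp x hu
  have harc : HasDerivAt (fun x : ℝ => (Real.sqrt 3 / 36) * Real.arctan ((2 * x ^ 2 + 1) / Real.sqrt 3))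
      (x / (12 * (1 + x ^ 2 + x ^ 4))) x := by
    have h := harc0.const_mul (Real.sqrt 3 / 36)
    refine h.congr_deriv ?_
    have hkey : 1 + ((2 * x ^ 2 + 1) / Real.sqrt 3) ^ 2 = (4 * (1 + x ^ 2 + x ^ 4)) / 3 := by
      rw [div_pow, hs3sq]; ring
    rw [hkey]
    have h3 : Real.sqrt 3 ≠ 0 := ne_of_gt hs3
    field_simp
    ring
  -- rational terms
  have hR1 : HasDerivAt (fun x : ℝ => 1 / (24 * (1 + x ^ 2 + x ^ 4)))
      ((0 * (24 * (1 + x ^ 2 + x ^ 4)) - 1 * (24 * (2 * x + 4 * x ^ 3))) / (24 * (1 + x ^ 2 + x ^ 4)) ^ 2) x :=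
    (hasDerivAt_const x 1).div (hqd.const_mul 24) (by positivity)
  have hR2 : HasDerivAt (fun x : ℝ => (x ^ 2 - 1) / (72 * (1 + x ^ 2 + x ^ 4) ^ 2))
      ((2 * x * (72 * (1 + x ^ 2 + x ^ 4) ^ 2)
        - (x ^ 2 - 1) * (72 * ((2:ℕ) * (1 + x ^ 2 + x ^ 4) ^ 1 * (2 * x + 4 * x ^ 3))))
        / (72 * (1 + x ^ 2 + x ^ 4) ^ 2) ^ 2) x :=
    (h1.sub_const 1).div ((hqd.pow 2).const_mul 72) (by positivity)
  have hG := (((hL1.sub hL2).sub harc).sub hR1).add hR2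
  refine hG.congr_deriv ?_
  have hq' := hq.ne'
  have hB' := hB.ne'
  push_cast
  field_simp
  ring

private lemma tendsto_Ganti :
    Tendsto Ganti atTop (𝓝 (-(Real.sqrt 3 * Real.pi) / 72)) := by
  have hinv2 : Tendsto (fun x : ℝ => (x ^ 2)⁻¹) atTop (𝓝 0) :=
    (tendsto_pow_atTop (n := 2) (by norm_num)).inv_tendsto_atTop
  -- log part
  have hlog : Tendsto (fun x : ℝ => (1/24) * Real.log (1 + x ^ 2 + x ^ 4)
      - (1/12) * Real.log (1 + x ^ 2)) atTop (𝓝 0) := by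
    have heq : ∀ x : ℝ, (1/24) * Real.log (1 + x ^ 2 + x ^ 4) - (1/12) * Real.log (1 + x ^ 2)
        = (1/24) * Real.log ((1 + x ^ 2 + x ^ 4) / (1 + x ^ 2) ^ 2) := by
      intro x
      rw [Real.log_div (by positivity) (by positivity), Real.log_pow]
      push_cast; ring
    simp only [heq]
    have hratio : Tendsto (fun x : ℝ => (1 + x ^ 2 + x ^ 4) / (1 + x ^ 2) ^ 2) atTop (𝓝 1) := by
      have hlow : Tendsto (fun x : ℝ => 1 - (x ^ 2)⁻¹) atTop (𝓝 1) := by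
        simpa using (tendsto_const_nhds (x := (1:ℝ))).sub hinv2
      apply tendsto_of_tendsto_of_tendsto_of_le_of_le' hlow tendsto_const_nhds
      · filter_upwards [eventually_ge_atTop (1:ℝ)] with x hx
        have h2 : (0:ℝ) < x ^ 2 := by positivity
        rw [sub_le_iff_le_add, div_add' _ _ _ (by positivity), le_div_iff₀ (by positivity),
          one_mul]
        have ht : (x ^ 2)⁻¹ * (1 + x ^ 2) ^ 2 = (x ^ 2)⁻¹ + 2 + x ^ 2 := by
          field_simp; ring
        rw [ht]
        nlinarith [inv_nonneg.2 h2.le]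
      · filter_upwards with x
        rw [div_le_one (by positivity)]
        nlinarith [sq_nonneg x]
    have hcont : Tendsto (fun t : ℝ => (1/24) * Real.log t) (𝓝 1) (𝓝 0) := by
      have := (Real.continuousAt_log (by norm_num : (1:ℝ) ≠ 0)).tendsto
      rw [Real.log_one] at this
      simpa using (this.const_mul (1/24 : ℝ))
    exact hcont.comp hratio
  -- arctan part
  have harc : Tendsto (fun x : ℝ => (Real.sqrt 3 / 36) * Real.arctan ((2 * x ^ 2 + 1) / Real.sqrt 3))
      atTop (𝓝 ((Real.sqrt 3 / 36) * (Real.pi / 2))) := by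
    have hs3 : (0:ℝ) < Real.sqrt 3 := Real.sqrt_pos.mpr (by norm_num)
    have hu : Tendsto (fun x : ℝ => (2 * x ^ 2 + 1) / Real.sqrt 3) atTop atTop := by
      apply Tendsto.atTop_div_const hs3
      apply tendsto_atTop_mono (fun x => ?_) tendsto_id
      simp only [id]
      nlinarith [sq_nonneg (x - 1)]
    have := (Real.tendsto_arctan_atTop.mono_right nhdsWithin_le_nhds).comp hu
    exact this.const_mul _
  -- 1/(24 q) part
  have hq : Tendsto (fun x : ℝ => 1 + x ^ 2 + x ^ 4) atTop atTop := by
    apply tendsto_atTop_mono (fun x => ?_) tendsto_id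
    simp only [id]
    nlinarith [sq_nonneg (x - 1), sq_nonneg (x ^ 2)]
  have hR1 : Tendsto (fun x : ℝ => 1 / (24 * (1 + x ^ 2 + x ^ 4))) atTop (𝓝 0) :=
    Tendsto.div_atTop tendsto_const_nhds (hq.const_mul_atTop (by norm_num))
  -- (x^2-1)/(72 q^2) part
  have hR2 : Tendsto (fun x : ℝ => (x ^ 2 - 1) / (72 * (1 + x ^ 2 + x ^ 4) ^ 2)) atTop (𝓝 0) := by
    apply tendsto_of_tendsto_of_tendsto_of_le_of_le' tendsto_const_nhds hinv2
    · filter_upwards [eventually_ge_atTop (1:ℝ)] with x hx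
      exact div_nonneg (by nlinarith) (by positivity)
    · filter_upwards [eventually_ge_atTop (1:ℝ)] with x hx
      rw [div_le_iff₀ (by positivity), ← sub_nonneg]
      have h2 : (0:ℝ) < x ^ 2 := by positivity
      have : (x ^ 2)⁻¹ * (72 * (1 + x ^ 2 + x ^ 4) ^ 2) - (x ^ 2 - 1)
          = (x ^ 2)⁻¹ * (72 * (1 + x ^ 2 + x ^ 4) ^ 2 - x ^ 2 * (x ^ 2 - 1)) := by
        field_simp
      rw [this]
      have : (0:ℝ) ≤ 72 * (1 + x ^ 2 + x ^ 4) ^ 2 - x ^ 2 * (x ^ 2 - 1) := by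
        nlinarith [sq_nonneg x, sq_nonneg (x ^ 2), sq_nonneg (1 + x ^ 2 + x ^ 4)]
      positivity
  have htot := ((hlog.sub harc).sub hR1).add hR2
  have : (0:ℝ) - (Real.sqrt 3 / 36) * (Real.pi / 2) - 0 + 0 = -(Real.sqrt 3 * Real.pi) / 72 := by
    ring
  rw [this] at htot
  exact htot

private lemma outer_integral :
    ∫ x in Set.Ioi (0:ℝ), x ^ 3 / (6 * (1 + x ^ 2) * (1 + x ^ 2 + x ^ 4) ^ 3)
      = (6 - Real.sqrt 3 * Real.pi) / 108 := by
  have key := integral_Ioi_of_hasDerivAt_of_nonneg' (a := (0:ℝ))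
      (g := Ganti)
      (g' := fun x => x ^ 3 / (6 * (1 + x ^ 2) * (1 + x ^ 2 + x ^ 4) ^ 3))
      (l := -(Real.sqrt 3 * Real.pi) / 72)
      (fun x _ => Ganti_hasDeriv x) (fun x hx => by
        have : (0:ℝ) < x := hx
        positivity) tendsto_Ganti
  rw [key]
  have harct : Real.arctan ((2 * (0:ℝ) ^ 2 + 1) / Real.sqrt 3) = Real.pi / 6 := by
    have h1 : ((2 * (0:ℝ) ^ 2 + 1) / Real.sqrt 3) = 1 / Real.sqrt 3 := by norm_num
    rw [h1, ← Real.tan_pi_div_six, Real.arctan_tan]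
    · linarith [Real.pi_pos]
    · linarith [Real.pi_pos]
  simp only [Ganti]
  rw [harct]
  norm_num
  ring

theorem quadrant_integral_14 :
    ∫ x in Set.Ioi (0:ℝ), ∫ y in Set.Ioi (0:ℝ), x ^ 3 * y / (1 + x ^ 2 + y ^ 2 + x ^ 2 * y ^ 2 + x ^ 4) ^ 4 = (6 - Real.sqrt 3 * Real.pi) / 108 := by
  rw [setIntegral_congr_fun (measurableSet_Ioi)
    (fun x (hx : x ∈ Set.Ioi (0:ℝ)) => inner_integral x hx)]
  exact outer_integral
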